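/- (Halanay-type inequality.) Let τ > 0 and α, γ, η > 0 with α + γ < η. Let u : [0,∞) → ℝ be a nonnegative continuous function that is locally Lipschitz on (2τ,∞) and satisfies, for almost all t > 2τ, u'(t) ≤ (α/τ) ∫_{t−τ}^{t} u(s−τ) ds + γ u(t−τ) − η u(t). Then u(t) ≤ (max_{s ∈ [0,2τ]} u(s)) · e^{−Γ(t−2τ)} for all t ≥ 2τ, where Γ ∈ (0,η) is the unique solution of e^{Γτ}(e^{Γτ}α + γ) + Γ = η. -/

import Mathlib

open MeasureTheory Set

lemma ftc_ineq (f φ : ℝ → ℝ) (L : NNReal) (a b c : ℝ) (hab : a ≤ b) (hbc : b < c)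
    (hlip : LipschitzOnWith L f (Set.Icc a c))
    (hφ : IntegrableOn φ (Set.Ioc a b))
    (hae : ∀ᵐ s ∂(volume : Measure ℝ), s ∈ Set.Ioc a b →
      DifferentiableAt ℝ f s ∧ deriv f s ≤ φ s) :
    f b - f a ≤ ∫ s in Set.Ioc a b, φ s := by
  rcases eq_or_lt_of_le hab with rfl | hab
  · simp
  have hfc : ContinuousOn f (Icc a c) := hlip.continuousOn
  set h : ℕ → ℝ := fun n => (c - b) / ((n : ℝ) + 1) with hh
  have hcb : 0 < c - b := sub_pos.2 hbc
  have hpos : ∀ n, 0 < h n := fun n => div_pos hcb (by positivity)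
  have hle : ∀ n, h n ≤ c - b := fun n =>
    div_le_self hcb.le (le_add_of_nonneg_left (Nat.cast_nonneg n))
  have htend : Filter.Tendsto h Filter.atTop (nhds 0) := by
    have := tendsto_one_div_add_atTop_nhds_zero_nat.const_mul (c - b)
    rw [mul_zero] at this
    refine this.congr fun n => ?_
    rw [hh]; ring
  -- integrability of f on subintervals of [a, c]
  have hfi : ∀ x y, x ∈ Icc a c → y ∈ Icc a c → IntervalIntegrable f volume x y := by
    intro x y hx hy
    exact (hfc.mono (uIcc_subset_Icc hx hy)).intervalIntegrable
  -- the shifted function is continuous on [a, b]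
  have hshift : ∀ n, ContinuousOn (fun s => f (s + h n)) (Icc a b) := by
    intro n
    apply hfc.comp (Continuous.continuousOn (by continuity))
    intro s hs
    show s + h n ∈ Icc a c
    exact ⟨by linarith [hs.1, (hpos n).le], by linarith [hs.2, hle n]⟩
  -- Step 1 : the integral of the difference quotient
  have E1 : ∀ n, ∫ s in a..b, (f (s + h n) - f s) / h n
      = ((∫ s in b..(b + h n), f s) - ∫ s in a..(a + h n), f s) / h n := by
    intro n
    rw [intervalIntegral.integral_div]
    congr 1
    have i1 : IntervalIntegrable (fun s => f (s + h n)) volume a b :=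
      ((hshift n).mono (by rw [uIcc_of_le hab.le])).intervalIntegrable
    have i2 : IntervalIntegrable f volume a b :=
      hfi a b ⟨le_rfl, by linarith⟩ ⟨hab.le, hbc.le⟩
    rw [intervalIntegral.integral_sub i1 i2, intervalIntegral.integral_comp_add_right f (h n)]
    have m1 : a + h n ∈ Icc a c := ⟨by linarith [(hpos n).le], by linarith [hle n]⟩
    have m2 : b + h n ∈ Icc a c := ⟨by linarith [(hpos n).le, hab.le], by linarith [hle n]⟩
    have ma : a ∈ Icc a c := ⟨le_rfl, by linarith⟩
    have mb : b ∈ Icc a c := ⟨hab.le, hbc.le⟩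
    have A1 := intervalIntegral.integral_add_adjacent_intervals
      (hfi _ _ m1 mb) (hfi _ _ mb m2)
    have A2 := intervalIntegral.integral_add_adjacent_intervals
      (hfi _ _ ma m1) (hfi _ _ m1 mb)
    linarith [A1, A2]
  -- Step 2 : endpoint estimates
  have E2 : ∀ (n : ℕ) (x : ℝ), x ∈ Icc a c → x + h n ≤ c →
      |(∫ s in x..(x + h n), f s) / h n - f x| ≤ (L : ℝ) * h n := by
    intro n x hx hxc
    have ht : 0 < h n := hpos n
    have hx2 : x + h n ∈ Icc a c := ⟨by linarith [hx.1, ht.le], hxc⟩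
    have isub : IntervalIntegrable (fun s => f s - f x) volume x (x + h n) :=
      (hfi _ _ hx hx2).sub intervalIntegrable_const
    have key : (∫ s in x..(x + h n), f s) - h n * f x
        = ∫ s in x..(x + h n), (f s - f x) := by
      rw [intervalIntegral.integral_sub (hfi _ _ hx hx2) intervalIntegrable_const,
        intervalIntegral.integral_const]
      simp [smul_eq_mul]
    have bnd : ‖∫ s in x..(x + h n), (f s - f x)‖ ≤ ((L : ℝ) * h n) * |x + h n - x| := by
      apply intervalIntegral.norm_integral_le_of_norm_le_const
      intro y hy
      rw [Set.uIoc_of_le (by linarith : x ≤ x + h n)] at hy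
      have hy2 : y ∈ Icc a c := ⟨by linarith [hy.1.le, hx.1], by linarith [hy.2]⟩
      have := hlip.dist_le_mul y hy2 x hx
      rw [Real.dist_eq, Real.dist_eq] at this
      have : |f y - f x| ≤ (L : ℝ) * |y - x| := this
      refine this.trans ?_
      have : |y - x| ≤ h n := by
        rw [abs_of_nonneg (by linarith [hy.1.le] : (0:ℝ) ≤ y - x)]
        linarith [hy.2]
      exact mul_le_mul_of_nonneg_left this L.coe_nonneg
    have habs : |x + h n - x| = h n := by
      rw [add_sub_cancel_left, abs_of_pos ht]
    rw [habs] at bnd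
    rw [← key, Real.norm_eq_abs] at bnd
    have heq : (∫ s in x..(x + h n), f s) / h n - f x
        = ((∫ s in x..(x + h n), f s) - h n * f x) / h n := by
      field_simp
    rw [heq, abs_div, abs_of_pos ht, div_le_iff₀ ht]
    calc |(∫ s in x..(x + h n), f s) - h n * f x| ≤ (L : ℝ) * h n * h n := bnd
      _ = (L : ℝ) * h n * h n := rfl
  set Φ : ℕ → ℝ := fun n => ∫ s in Set.Ioc a b, (f (s + h n) - f s) / h n with hΦ
  have hΦint : ∀ n, Φ n = ∫ s in a..b, (f (s + h n) - f s) / h n := by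
    intro n
    rw [intervalIntegral.integral_of_le hab.le]
  have hLh : Filter.Tendsto (fun n => (L : ℝ) * h n) Filter.atTop (nhds 0) := by
    simpa using htend.const_mul (L : ℝ)
  have tendA : ∀ x : ℝ, x ∈ Icc a c → (∀ n : ℕ, x + h n ≤ c) →
      Filter.Tendsto (fun n => (∫ s in x..(x + h n), f s) / h n) Filter.atTop (nhds (f x)) := by
    intro x hx hxc
    have h0 : Filter.Tendsto (fun n => (∫ s in x..(x + h n), f s) / h n - f x)
        Filter.atTop (nhds 0) := by
      apply squeeze_zero_norm (fun n => E2 n x hx (hxc n)) hLh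
    have := h0.add_const (f x)
    simpa using this
  have tendΦ1 : Filter.Tendsto Φ Filter.atTop (nhds (f b - f a)) := by
    have hA := tendA b ⟨hab.le, hbc.le⟩ (fun n => by linarith [hle n])
    have hB := tendA a ⟨le_rfl, by linarith⟩ (fun n => by linarith [hle n])
    have := hA.sub hB
    refine this.congr fun n => ?_
    rw [hΦint n, E1 n, sub_div]
  -- Step 3 : dominated convergence
  have hboundp : ∀ n, ∀ s ∈ Ioc a b, |(f (s + h n) - f s) / h n| ≤ (L : ℝ) := by
    intro n s hs
    have ht : 0 < h n := hpos n
    have hs1 : s ∈ Icc a c := ⟨le_of_lt hs.1, by linarith [hs.2]⟩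
    have hs2 : s + h n ∈ Icc a c := ⟨by linarith [hs.1.le, ht.le], by linarith [hs.2, hle n]⟩
    have hd := hlip.dist_le_mul (s + h n) hs2 s hs1
    rw [Real.dist_eq, Real.dist_eq, add_sub_cancel_left, abs_of_pos ht] at hd
    rw [abs_div, abs_of_pos ht, div_le_iff₀ ht]
    exact hd
  have meas_Ioc : MeasurableSet (Ioc a b) := measurableSet_Ioc
  have F_meas : ∀ n : ℕ, AEStronglyMeasurable (fun s => (f (s + h n) - f s) / h n)
      (volume.restrict (Ioc a b)) := by
    intro n
    have : ContinuousOn (fun s => (f (s + h n) - f s) / h n) (Ioc a b) := by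
      apply ContinuousOn.div_const
      exact ((hshift n).mono Ioc_subset_Icc_self).sub
        ((hfc.mono (Icc_subset_Icc le_rfl hbc.le)).mono Ioc_subset_Icc_self)
    exact this.aestronglyMeasurable meas_Ioc
  have bound_int : Integrable (fun _ : ℝ => (L : ℝ)) (volume.restrict (Ioc a b)) := by
    rw [← IntegrableOn]
    exact integrableOn_const measure_Ioc_lt_top.ne
  have h_bound : ∀ n : ℕ, ∀ᵐ s ∂(volume.restrict (Ioc a b)),
      ‖(f (s + h n) - f s) / h n‖ ≤ (L : ℝ) := by
    intro n
    filter_upwards [ae_restrict_mem meas_Ioc] with s hs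
    rw [Real.norm_eq_abs]
    exact hboundp n s hs
  have h_lim : ∀ᵐ s ∂(volume.restrict (Ioc a b)),
      Filter.Tendsto (fun n => (f (s + h n) - f s) / h n) Filter.atTop (nhds (deriv f s)) := by
    filter_upwards [ae_restrict_of_ae hae, ae_restrict_mem meas_Ioc] with s hs hmem
    have hdiff : DifferentiableAt ℝ f s := (hs hmem).1
    have hslope := hasDerivAt_iff_tendsto_slope.1 hdiff.hasDerivAt
    have htend2 : Filter.Tendsto (fun n => s + h n) Filter.atTop (nhdsWithin s {s}ᶜ) := by
      rw [tendsto_nhdsWithin_iff]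
      constructor
      · simpa using (htend.const_add s)
      · exact Filter.Eventually.of_forall fun n => by
          simp only [Set.mem_compl_iff, Set.mem_singleton_iff, add_eq_left]
          exact (hpos n).ne'
    have := hslope.comp htend2
    refine this.congr fun n => ?_
    simp only [Function.comp_apply, slope_def_field, add_sub_cancel_left]
  have tendΦ2 : Filter.Tendsto Φ Filter.atTop (nhds (∫ s in Set.Ioc a b, deriv f s)) :=
    MeasureTheory.tendsto_integral_of_dominated_convergence _ F_meas bound_int h_bound h_lim
  have keyeq : f b - f a = ∫ s in Set.Ioc a b, deriv f s :=
    tendsto_nhds_unique tendΦ1 tendΦ2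
  -- integrability of deriv f
  have hderiv_meas : AEStronglyMeasurable (deriv f) (volume.restrict (Ioc a b)) :=
    (measurable_deriv f).aestronglyMeasurable
  have hderiv_bdd : ∀ᵐ s ∂(volume.restrict (Ioc a b)), ‖deriv f s‖ ≤ (L : ℝ) := by
    filter_upwards [h_lim, ae_restrict_mem meas_Ioc] with s hs hmem
    have : Filter.Tendsto (fun n => |(f (s + h n) - f s) / h n|) Filter.atTop
        (nhds |deriv f s|) := hs.abs
    rw [Real.norm_eq_abs]
    exact le_of_tendsto this (Filter.Eventually.of_forall fun n => hboundp n s hmem)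
  have hderiv_int : Integrable (deriv f) (volume.restrict (Ioc a b)) :=
    Integrable.mono' bound_int hderiv_meas hderiv_bdd
  rw [keyeq]
  apply integral_mono_ae hderiv_int hφ
  filter_upwards [ae_restrict_of_ae hae, ae_restrict_mem meas_Ioc] with s hs hmem
  exact (hs hmem).2

set_option maxHeartbeats 2000000 in
theorem stmt_17
    (τ α γ η : ℝ) (hτ : 0 < τ) (hα : 0 < α) (hγ : 0 < γ) (hη : 0 < η)
    (hαγη : α + γ < η)
    (u : ℝ → ℝ)
    (hu_nonneg : ∀ t, 0 ≤ t → 0 ≤ u t)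
    (hu_cont : ContinuousOn u (Set.Ici 0))
    (hu_lip : ∀ t ∈ Set.Ioi (2 * τ), ∃ ε > (0:ℝ), ∃ L : NNReal,
      LipschitzOnWith L u (Set.Ioo (t - ε) (t + ε) ∩ Set.Ioi (2 * τ)))
    (hu_ineq : ∀ᵐ t ∂(volume : Measure ℝ), t ∈ Set.Ioi (2 * τ) →
      DifferentiableAt ℝ u t →
      deriv u t ≤ α / τ * (∫ s in (t - τ)..t, u (s - τ)) + γ * u (t - τ) - η * u t)
    (Γ : ℝ) (hΓmem : Γ ∈ Set.Ioo (0:ℝ) η)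
    (hΓeq : Real.exp (Γ * τ) * (Real.exp (Γ * τ) * α + γ) + Γ = η) :
    ∀ t, 2 * τ ≤ t →
      u t ≤ sSup (u '' Set.Icc 0 (2 * τ)) * Real.exp (-Γ * (t - 2 * τ)) := by
  have h2τ : (0:ℝ) < 2 * τ := by linarith
  set M := sSup (u '' Set.Icc 0 (2 * τ)) with hMdef
  have hucontAt : ∀ s : ℝ, 0 < s → ContinuousAt u s := by
    intro s hs
    exact (hu_cont s hs.le).continuousAt (Ici_mem_nhds hs)
  have hMle : ∀ s ∈ Set.Icc 0 (2 * τ), u s ≤ M := by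
    intro s hs
    apply le_csSup
    · exact (isCompact_Icc.image_of_continuousOn
        (hu_cont.mono (fun x hx => hx.1))).bddAbove
    · exact Set.mem_image_of_mem u hs
  have hM0 : 0 ≤ M := le_trans (hu_nonneg 0 le_rfl) (hMle 0 ⟨le_rfl, h2τ.le⟩)
  have hΓ0 : 0 < Γ := hΓmem.1
  have main : ∀ δ : ℝ, 0 < δ → ∀ t', 2 * τ ≤ t' →
      u t' ≤ (M + δ) * Real.exp (-Γ * (t' - 2 * τ)) := by
    intro δ hδ t' ht'
    set W : ℝ → ℝ := fun s => (M + δ) * Real.exp (-Γ * (s - 2 * τ)) with hWdef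
    have hWcont : Continuous W := by
      apply Continuous.mul continuous_const
      exact Real.continuous_exp.comp (by continuity)
    have hWpos : ∀ s, 0 < W s := fun s => by
      have : 0 < M + δ := by linarith
      positivity
    have hWanti : ∀ x y : ℝ, x ≤ y → W y ≤ W x := by
      intro x y hxy
      apply mul_le_mul_of_nonneg_left _ (by linarith : (0:ℝ) ≤ M + δ)
      apply Real.exp_le_exp.2
      nlinarith
    have hWshift : ∀ s x : ℝ, W (s - x) = Real.exp (Γ * x) * W s := by
      intro s x
      show (M + δ) * Real.exp (-Γ * (s - x - 2 * τ))
        = Real.exp (Γ * x) * ((M + δ) * Real.exp (-Γ * (s - 2 * τ)))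
      rw [show Real.exp (Γ * x) * ((M + δ) * Real.exp (-Γ * (s - 2 * τ)))
        = (M + δ) * (Real.exp (Γ * x) * Real.exp (-Γ * (s - 2 * τ))) by ring,
        ← Real.exp_add]
      ring_nf
    by_contra hcon
    push_neg at hcon
    set S := {s : ℝ | 2 * τ ≤ s ∧ W s ≤ u s} with hSdef
    have hSne : S.Nonempty := ⟨t', ht', hcon.le⟩
    have hSbd : BddBelow S := ⟨2 * τ, fun s hs => hs.1⟩
    have hSclosed : IsClosed S := by
      have : S = Set.Ici (2 * τ) ∩ (fun s => u s - W s) ⁻¹' Set.Ici 0 := by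
        ext s
        simp only [hSdef, Set.mem_setOf_eq, Set.mem_inter_iff, Set.mem_Ici, Set.mem_preimage,
          sub_nonneg]
      rw [this]
      apply ContinuousOn.preimage_isClosed_of_isClosed _ isClosed_Ici isClosed_Ici
      apply ContinuousOn.sub _ hWcont.continuousOn
      intro s hs
      exact (hucontAt s (lt_of_lt_of_le h2τ hs)).continuousWithinAt
    set T := sInf S with hTdef
    have hTmem : T ∈ S := hSclosed.csInf_mem hSne hSbd
    have hT2τ : 2 * τ ≤ T := hTmem.1
    have hbefore : ∀ s, 2 * τ ≤ s → s < T → u s < W s := by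
      intro s h1 h2
      by_contra hc
      push_neg at hc
      exact absurd (csInf_le hSbd ⟨h1, hc⟩) (not_le.2 h2)
    have huW : ∀ r : ℝ, 0 ≤ r → r < T → u r ≤ W r := by
      intro r h0 hrT
      rcases le_or_gt r (2 * τ) with hr | hr
      · refine (hMle r ⟨h0, hr⟩).trans ?_
        have h1 : (1:ℝ) ≤ Real.exp (-Γ * (r - 2 * τ)) := by
          rw [Real.one_le_exp_iff]
          nlinarith
        show M ≤ (M + δ) * Real.exp (-Γ * (r - 2 * τ))
        nlinarith [mul_le_mul_of_nonneg_left h1 (by linarith : (0:ℝ) ≤ M + δ)]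
      · exact (hbefore r hr.le hrT).le
    have hTgt : 2 * τ < T := by
      rcases eq_or_lt_of_le hT2τ with he | hl
      · exfalso
        have h1 : u (2 * τ) ≤ M := hMle _ ⟨h2τ.le, le_rfl⟩
        have h2 : W (2 * τ) ≤ u (2 * τ) := by rw [he]; exact hTmem.2
        have h3 : W (2 * τ) = M + δ := by
          show (M + δ) * Real.exp (-Γ * (2 * τ - 2 * τ)) = M + δ
          simp
        linarith
      · exact hl
    set φ₀ : ℝ → ℝ := fun s => (η - Γ) * W s - η * u s with hφ₀def
    have hφ₀cont : ∀ x y : ℝ, 0 < x → ContinuousOn φ₀ (Set.Icc x y) := by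
      intro x y hx
      apply ContinuousOn.sub (continuousOn_const.mul hWcont.continuousOn)
      apply ContinuousOn.mul continuousOn_const
      intro s hs
      exact (hucontAt s (lt_of_lt_of_le hx hs.1)).continuousWithinAt
    have hEst : ∀ s : ℝ, 2 * τ < s → s ≤ T →
        α / τ * (∫ r in (s - τ)..s, u (r - τ)) + γ * u (s - τ) - η * u s ≤ φ₀ s := by
      intro s hs1 hs2
      have hsτ : s - τ ≤ s := by linarith
      -- pointwise bound for the integrand
      have hptw : ∀ r ∈ Set.Icc (s - τ) s, u (r - τ) ≤ W (s - 2 * τ) := by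
        intro r hr
        have h0 : 0 ≤ r - τ := by linarith [hr.1]
        have hrT : r - τ < T := by linarith [hr.2, hs2]
        refine (huW _ h0 hrT).trans (hWanti _ _ ?_)
        linarith [hr.1]
      have hint1 : IntervalIntegrable (fun r => u (r - τ)) volume (s - τ) s := by
        apply ContinuousOn.intervalIntegrable
        rw [Set.uIcc_of_le hsτ]
        intro r hr
        have : ContinuousAt (fun r : ℝ => u (r - τ)) r :=
          ContinuousAt.comp (g := u) (hucontAt (r - τ) (by linarith [hr.1]))
            (continuousAt_id.sub continuousAt_const)
        exact this.continuousWithinAt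
      have hIb : (∫ r in (s - τ)..s, u (r - τ)) ≤ τ * W (s - 2 * τ) := by
        have := intervalIntegral.integral_mono_on hsτ hint1
          intervalIntegrable_const hptw
        rw [intervalIntegral.integral_const, smul_eq_mul] at this
        calc (∫ r in (s - τ)..s, u (r - τ)) ≤ (s - (s - τ)) * W (s - 2 * τ) := this
          _ = τ * W (s - 2 * τ) := by ring
      have hW2 : W (s - 2 * τ) = Real.exp (Γ * τ) * (Real.exp (Γ * τ) * W s) := by
        rw [show s - 2 * τ = s - τ - τ by ring, hWshift, hWshift]
      have hW1 : u (s - τ) ≤ Real.exp (Γ * τ) * W s := by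
        rw [← hWshift]
        exact huW _ (by linarith) (by linarith)
      have hA : α / τ * (∫ r in (s - τ)..s, u (r - τ))
          ≤ α * (Real.exp (Γ * τ) * (Real.exp (Γ * τ) * W s)) := by
        have h1 : α / τ * (∫ r in (s - τ)..s, u (r - τ)) ≤ α / τ * (τ * W (s - 2 * τ)) := by
          apply mul_le_mul_of_nonneg_left hIb (by positivity)
        calc α / τ * (∫ r in (s - τ)..s, u (r - τ)) ≤ α / τ * (τ * W (s - 2 * τ)) := h1
          _ = α * W (s - 2 * τ) := by field_simp
          _ = α * (Real.exp (Γ * τ) * (Real.exp (Γ * τ) * W s)) := by rw [hW2]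
      have hB : γ * u (s - τ) ≤ γ * (Real.exp (Γ * τ) * W s) :=
        mul_le_mul_of_nonneg_left hW1 hγ.le
      have hfin : α * (Real.exp (Γ * τ) * (Real.exp (Γ * τ) * W s))
          + γ * (Real.exp (Γ * τ) * W s) = (η - Γ) * W s := by
        linear_combination (W s) * hΓeq
      show _ ≤ (η - Γ) * W s - η * u s
      linarith [hA, hB, hfin.le, hfin.ge]
    have hφ₀ii : ∀ x y : ℝ, 2 * τ < x → x ≤ y → IntervalIntegrable φ₀ volume x y := by
      intro x y hx hxy
      apply ContinuousOn.intervalIntegrable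
      rw [Set.uIcc_of_le hxy]
      exact hφ₀cont x y (lt_trans h2τ hx)
    have star : ∀ a b : ℝ, 2 * τ < a → a ≤ b → b ≤ T →
        u b - u a ≤ ∫ r in a..b, φ₀ r := by
      intro a b ha hab hbT
      set P : Set ℝ := {x | u x - u a ≤ ∫ r in a..x, φ₀ r} with hPdef
      have hPa : a ∈ P := by
        simp only [hPdef, Set.mem_setOf_eq, intervalIntegral.integral_same, sub_self, le_refl]
      have hPclosed : IsClosed (P ∩ Set.Icc a b) := by
        have heq : P ∩ Set.Icc a b
            = Set.Icc a b ∩ (fun x => u x - u a - ∫ r in a..x, φ₀ r) ⁻¹' Set.Iic 0 := by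
          ext x
          simp only [hPdef, Set.mem_setOf_eq, Set.mem_inter_iff, Set.mem_preimage,
            Set.mem_Iic, sub_nonpos, and_comm, sub_le_iff_le_add, zero_add]
        rw [heq]
        apply ContinuousOn.preimage_isClosed_of_isClosed _ isClosed_Icc isClosed_Iic
        apply ContinuousOn.sub
        · apply ContinuousOn.sub _ continuousOn_const
          intro x hx
          exact (hucontAt x (by linarith [hx.1] : (0:ℝ) < x)).continuousWithinAt
        · have := intervalIntegral.continuousOn_primitive_interval
            (f := φ₀) (a := a) (b := b) (μ := volume) ?_
          · rwa [Set.uIcc_of_le hab] at this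
          · rw [Set.uIcc_of_le hab]
            exact ((hφ₀cont a b (lt_trans h2τ ha)).integrableOn_compact isCompact_Icc)
      have hstep : ∀ x ∈ P ∩ Set.Ico a b, ∀ y ∈ Set.Ioi x, (P ∩ Set.Ioc x y).Nonempty := by
        intro x hx y hy
        have hx2τ : 2 * τ < x := lt_of_lt_of_le ha hx.2.1
        obtain ⟨ε, hε, L, hL⟩ := hu_lip x hx2τ
        set e := min (ε / 2) (min (b - x) (y - x)) with hedef
        have he : 0 < e := by
          apply lt_min (by linarith)
          exact lt_min (by linarith [hx.2.2]) (by linarith [Set.mem_Ioi.1 hy])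
        have he1 : e ≤ ε / 2 := min_le_left _ _
        have he2 : e ≤ b - x := (min_le_right _ _).trans (min_le_left _ _)
        have he3 : e ≤ y - x := (min_le_right _ _).trans (min_le_right _ _)
        set z := x + e / 2 with hzdef
        set c := x + 3 / 4 * e with hcdef
        clear_value e z c
        have hIccV : Set.Icc x c ⊆ Set.Ioo (x - ε) (x + ε) ∩ Set.Ioi (2 * τ) := by
          intro w hw
          refine ⟨⟨by linarith [hw.1], by linarith [hw.2, he1]⟩, ?_⟩
          exact Set.mem_Ioi.2 (lt_of_lt_of_le hx2τ hw.1)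
        have hlipc : LipschitzOnWith L u (Set.Icc x c) := hL.mono hIccV
        have hxz : x ≤ z := by linarith
        have hzc : z < c := by linarith
        have hzb : z ≤ b := by linarith
        have hzT : z ≤ T := hzb.trans hbT
        have hφint : MeasureTheory.IntegrableOn φ₀ (Set.Ioc x z) volume := by
          apply MeasureTheory.IntegrableOn.mono_set
            ((hφ₀cont x z (lt_trans h2τ hx2τ)).integrableOn_compact isCompact_Icc)
          exact Set.Ioc_subset_Icc_self
        have hVopen : IsOpen (Set.Ioo (x - ε) (x + ε) ∩ Set.Ioi (2 * τ)) :=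
          isOpen_Ioo.inter isOpen_Ioi
        have hae : ∀ᵐ w ∂(volume : Measure ℝ), w ∈ Set.Ioc x z →
            DifferentiableAt ℝ u w ∧ deriv u w ≤ φ₀ w := by
          filter_upwards [hL.ae_differentiableWithinAt_of_mem_of_real, hu_ineq]
            with w hw1 hw2 hwmem
          have hwV : w ∈ Set.Ioo (x - ε) (x + ε) ∩ Set.Ioi (2 * τ) :=
            hIccV ⟨hwmem.1.le, hwmem.2.trans hzc.le⟩
          have hdiff : DifferentiableAt ℝ u w :=
            (hw1 hwV).differentiableAt (hVopen.mem_nhds hwV)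
          refine ⟨hdiff, ?_⟩
          have h2w : 2 * τ < w := lt_of_lt_of_le hx2τ hwmem.1.le
          exact (hw2 h2w hdiff).trans (hEst w h2w (hwmem.2.trans hzT))
        have hftc := ftc_ineq u φ₀ L x z c hxz hzc hlipc hφint hae
        refine ⟨z, ?_, ⟨by linarith, by linarith⟩⟩
        show u z - u a ≤ ∫ r in a..z, φ₀ r
        have hxP : u x - u a ≤ ∫ r in a..x, φ₀ r := hx.1
        have hadd : (∫ r in a..x, φ₀ r) + ∫ r in x..z, φ₀ r = ∫ r in a..z, φ₀ r :=
          intervalIntegral.integral_add_adjacent_intervals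
            (hφ₀ii a x ha hx.2.1) (hφ₀ii x z hx2τ hxz)
        have hioc : (∫ r in Set.Ioc x z, φ₀ r) = ∫ r in x..z, φ₀ r :=
          (intervalIntegral.integral_of_le hxz).symm
        linarith [hftc, hioc.le, hioc.ge]
      have := IsClosed.Icc_subset_of_forall_exists_gt hPclosed hPa hstep
      exact this ⟨hab, le_rfl⟩
    -- Gronwall argument
    set f0 : ℝ → ℝ := fun s => W s - u s with hf0def
    have hf0contOn : ContinuousOn f0 (Set.Ioi 0) := by
      apply ContinuousOn.sub hWcont.continuousOn
      intro s hs
      exact (hucontAt s hs).continuousWithinAt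
    have hf0ii : ∀ x y : ℝ, 0 < x → x ≤ y → IntervalIntegrable f0 volume x y := by
      intro x y hx hxy
      apply ContinuousOn.intervalIntegrable
      rw [Set.uIcc_of_le hxy]
      exact hf0contOn.mono (fun r hr => lt_of_lt_of_le hx hr.1)
    set ψ : ℝ → ℝ := fun x => ∫ r in x..T, f0 r with hψdef
    have hWftc : ∀ x : ℝ, (∫ r in x..T, (-Γ) * W r) = W T - W x := by
      intro x
      apply intervalIntegral.integral_eq_sub_of_hasDerivAt
      · intro r hr
        have h1 : HasDerivAt (fun s : ℝ => -Γ * (s - 2 * τ)) (-Γ) r := by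
          simpa using ((hasDerivAt_id r).sub_const (2 * τ)).const_mul (-Γ)
        have h2 := (h1.exp).const_mul (M + δ)
        convert h2 using 1
        show -Γ * ((M + δ) * Real.exp (-Γ * (r - 2 * τ))) = _
        ring
        rfl
      · exact (continuous_const.mul hWcont).intervalIntegrable _ _
    have hkey : ∀ x : ℝ, 2 * τ < x → x ≤ T → W x - u x ≤ η * ψ x := by
      intro x hx hxT
      have hstar := star x T hx hxT le_rfl
      have hWT := hTmem.2
      have h0T : (0:ℝ) < x := lt_trans h2τ hx
      have hint1 : IntervalIntegrable (fun r => (-Γ) * W r) volume x T :=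
        (continuous_const.mul hWcont).intervalIntegrable _ _
      have hint2 : IntervalIntegrable φ₀ volume x T := hφ₀ii x T hx hxT
      have hsub : (∫ r in x..T, ((-Γ) * W r - φ₀ r))
          = (∫ r in x..T, (-Γ) * W r) - ∫ r in x..T, φ₀ r :=
        intervalIntegral.integral_sub hint1 hint2
      have hcongr : ∀ r : ℝ, (-Γ) * W r - φ₀ r = (-η) * f0 r := by
        intro r
        show (-Γ) * W r - ((η - Γ) * W r - η * u r) = (-η) * (W r - u r)
        ring
      have hceq : (∫ r in x..T, ((-Γ) * W r - φ₀ r)) = ∫ r in x..T, (-η) * f0 r := by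
        congr 1
        funext r
        exact hcongr r
      have hmul : (∫ r in x..T, (-η) * f0 r) = (-η) * ψ x :=
        intervalIntegral.integral_const_mul _ _
      have h1 := hWftc x
      linarith [hstar, h1, hsub, hceq, hmul, hWT]
    have hψnonneg : ∀ x : ℝ, 2 * τ ≤ x → x ≤ T → 0 ≤ ψ x := by
      intro x hx hxT
      show (0:ℝ) ≤ ∫ r in x..T, f0 r
      rw [intervalIntegral.integral_of_le hxT]
      apply MeasureTheory.setIntegral_nonneg_ae measurableSet_Ioc
      have hsing : ∀ᵐ r ∂(volume : Measure ℝ), r ≠ T := by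
        have h0 : (volume : Measure ℝ) {T} = 0 := measure_singleton T
        filter_upwards [MeasureTheory.measure_eq_zero_iff_ae_notMem.1 h0] with r hr
        simpa using hr
      filter_upwards [hsing] with r hr hrmem
      have : u r < W r := hbefore r (le_trans hx hrmem.1.le) (lt_of_le_of_ne hrmem.2 hr)
      show 0 ≤ W r - u r
      linarith
    have hψderiv : ∀ x : ℝ, 2 * τ < x → x < T → HasDerivAt ψ (-(f0 x)) x := by
      intro x hx hxT
      have h0x : (0:ℝ) < x := lt_trans h2τ hx
      have hint : IntervalIntegrable f0 volume T x := (hf0ii x T h0x hxT.le).symm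
      have hmeas : StronglyMeasurableAtFilter f0 (nhds x) volume :=
        ContinuousOn.stronglyMeasurableAtFilter isOpen_Ioi hf0contOn x h0x
      have hcont : ContinuousAt f0 x :=
        (hWcont.continuousAt).sub (hucontAt x h0x)
      have h := intervalIntegral.integral_hasDerivAt_right hint hmeas hcont
      have hψeq : ψ = fun y => -∫ r in T..y, f0 r := by
        funext y
        show (∫ r in y..T, f0 r) = -∫ r in T..y, f0 r
        rw [intervalIntegral.integral_symm y T, neg_neg]
      rw [hψeq]
      exact h.neg
    set g : ℝ → ℝ := fun x => ψ x * Real.exp (η * x) with hgdef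
    set x₀ := (2 * τ + T) / 2 with hx0def
    have hx01 : 2 * τ < x₀ := by
      show 2 * τ < (2 * τ + T) / 2
      linarith [hTgt]
    have hx02 : x₀ < T := by
      show (2 * τ + T) / 2 < T
      linarith [hTgt]
    have hgd : ∀ x : ℝ, 2 * τ < x → x < T →
        HasDerivAt g (-(f0 x) * Real.exp (η * x) + ψ x * (Real.exp (η * x) * η)) x := by
      intro x hx hxT
      have hexp : HasDerivAt (fun y : ℝ => Real.exp (η * y)) (Real.exp (η * x) * η) x := by
        have h1 : HasDerivAt (fun y : ℝ => η * y) η x := by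
          simpa using (hasDerivAt_id x).const_mul η
        exact h1.exp
      exact (hψderiv x hx hxT).mul hexp
    have hψcont : ContinuousOn ψ (Set.Icc x₀ T) := by
      have hint : MeasureTheory.IntegrableOn f0 (Set.uIcc x₀ T) volume := by
        rw [Set.uIcc_of_le hx02.le]
        exact (hf0contOn.mono (fun r hr => lt_of_lt_of_le (lt_trans h2τ hx01) hr.1)
          : ContinuousOn f0 (Set.Icc x₀ T)).integrableOn_compact isCompact_Icc
      have := intervalIntegral.continuousOn_primitive_interval_left hint
      rwa [Set.uIcc_of_le hx02.le] at this
    have hgmono : MonotoneOn g (Set.Icc x₀ T) := by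
      apply monotoneOn_of_deriv_nonneg (convex_Icc x₀ T)
      · exact hψcont.mul (Real.continuous_exp.comp (continuous_const.mul continuous_id)).continuousOn
      · intro x hx
        rw [interior_Icc] at hx
        exact ((hgd x (lt_trans hx01 hx.1) hx.2).differentiableAt).differentiableWithinAt
      · intro x hx
        rw [interior_Icc] at hx
        have h2x : 2 * τ < x := lt_trans hx01 hx.1
        rw [(hgd x h2x hx.2).deriv]
        have hk := hkey x h2x hx.2.le
        have hE : (0:ℝ) < Real.exp (η * x) := Real.exp_pos _
        have hf0x : f0 x = W x - u x := rfl
        nlinarith [hk, hE, hf0x.le, hf0x.ge]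
    have hgT : g T = 0 := by
      show ψ T * Real.exp (η * T) = 0
      have : ψ T = 0 := intervalIntegral.integral_same
      rw [this, zero_mul]
    have hgle := hgmono ⟨le_rfl, hx02.le⟩ ⟨hx02.le, le_rfl⟩ hx02.le
    rw [hgT] at hgle
    have hψ0 : ψ x₀ ≤ 0 := by
      have hE : (0:ℝ) < Real.exp (η * x₀) := Real.exp_pos _
      have hgx : g x₀ = ψ x₀ * Real.exp (η * x₀) := rfl
      nlinarith [hgle, hE, hgx.le, hgx.ge]
    have hψeq0 : ψ x₀ = 0 := le_antisymm hψ0 (hψnonneg x₀ hx01.le hx02.le)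
    have hfinal := hkey x₀ hx01 hx02.le
    rw [hψeq0, mul_zero] at hfinal
    have := hbefore x₀ hx01.le hx02
    linarith
  intro t ht
  have hE : (0:ℝ) < Real.exp (-Γ * (t - 2 * τ)) := Real.exp_pos _
  refine le_of_forall_pos_le_add fun ε hε => ?_
  have h1 := main (ε / Real.exp (-Γ * (t - 2 * τ))) (by positivity) t ht
  have h2 : (M + ε / Real.exp (-Γ * (t - 2 * τ))) * Real.exp (-Γ * (t - 2 * τ))
      = M * Real.exp (-Γ * (t - 2 * τ)) + ε := by
    field_simp
  linarith [h1, h2.le]
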